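/- Let N ≥ 1, g > 0, and let l₁, …, l_N > 0 be real constants with Σ_α l_α = 1. Let h, u₁, …, u_N, T₁, …, T_N : ℝ × ℝ → ℝ be continuously differentiable functions of (t, x) with h > 0 everywhere, let z_b : ℝ → ℝ be continuously differentiable, and suppose ∂_t h + ∂_x(h·ū) = 0, ∂_t(h·u_α) + ∂_x(h·u_α·ū + g·h²/2) = −g·h·∂_x z_b, and ∂_t(h·T_α) + ∂_x(h·ū·T_α) = 0 for all α, where ū = Σ_{β=1}^N l_β·u_β. Then, setting σ_α = u_α − ū, the following equations hold: ∂_t(h·ū) + ∂_x(h·ū² + g·h²/2) = −g·h·∂_x z_b, and ∂_t(h·σ_α) + ∂_x(h·ū·σ_α) = 0 for every α; moreover Σ_{α=1}^N l_α·h·σ_α = 0 identically. -/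

import Mathlib

/-- reformulation of the barotropic system.  If `(h, u_α, T_α)`
solve the barotropic system `∂_t h + ∂_x(h ū) = 0`,
`∂_t(h u_α) + ∂_x(h u_α ū + g h²/2) = −g h ∂_x z_b`,
`∂_t(h T_α) + ∂_x(h ū T_α) = 0`, then with `σ_α = u_α − ū` the equations
`∂_t(h ū) + ∂_x(h ū² + g h²/2) = −g h ∂_x z_b` and
`∂_t(h σ_α) + ∂_x(h ū σ_α) = 0` hold, and `Σ_α l_α h σ_α = 0` identically.
Partial derivatives are expressed as `deriv` of one-variable slices. -/
theorem stmt19 (N : ℕ) (hN : 1 ≤ N) (g : ℝ) (hg : 0 < g)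
    (l : Fin N → ℝ) (hl : ∀ α, 0 < l α) (hlsum : ∑ α, l α = 1)
    (h : ℝ → ℝ → ℝ) (u T : Fin N → ℝ → ℝ → ℝ) (zb : ℝ → ℝ)
    (hreg : ContDiff ℝ 1 (fun p : ℝ × ℝ => h p.1 p.2))
    (hureg : ∀ α, ContDiff ℝ 1 (fun p : ℝ × ℝ => u α p.1 p.2))
    (hTreg : ∀ α, ContDiff ℝ 1 (fun p : ℝ × ℝ => T α p.1 p.2))
    (hzb : ContDiff ℝ 1 zb)
    (hpos : ∀ t x, 0 < h t x)
    (ubar : ℝ → ℝ → ℝ) (hubar : ∀ t x, ubar t x = ∑ β, l β * u β t x)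
    (σ : Fin N → ℝ → ℝ → ℝ) (hσ : ∀ α t x, σ α t x = u α t x - ubar t x)
    (mass : ∀ t x, deriv (fun s => h s x) t + deriv (fun y => h t y * ubar t y) x = 0)
    (mom : ∀ α t x,
      deriv (fun s => h s x * u α s x) t
        + deriv (fun y => h t y * u α t y * ubar t y + g * (h t y) ^ 2 / 2) x
      = -(g * h t x * deriv zb x))
    (trac : ∀ α t x,
      deriv (fun s => h s x * T α s x) t
        + deriv (fun y => h t y * ubar t y * T α t y) x = 0) :
    (∀ t x,
      deriv (fun s => h s x * ubar s x) t
        + deriv (fun y => h t y * (ubar t y) ^ 2 + g * (h t y) ^ 2 / 2) x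
      = -(g * h t x * deriv zb x))
    ∧ (∀ α t x,
      deriv (fun s => h s x * σ α s x) t
        + deriv (fun y => h t y * ubar t y * σ α t y) x = 0)
    ∧ (∀ t x, ∑ α, l α * h t x * σ α t x = 0) := by

  have Hh : Differentiable ℝ (fun p : ℝ × ℝ => h p.1 p.2) := hreg.differentiable one_ne_zero
  have Hu : ∀ α, Differentiable ℝ (fun p : ℝ × ℝ => u α p.1 p.2) :=
    fun α => (hureg α).differentiable one_ne_zero
  have dt_h : ∀ x t, DifferentiableAt ℝ (fun s => h s x) t := fun x t =>
    (Hh.comp (differentiable_id.prodMk (differentiable_const x))).differentiableAt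
  have dx_h : ∀ t x, DifferentiableAt ℝ (fun y => h t y) x := fun t x =>
    (Hh.comp ((differentiable_const t).prodMk differentiable_id)).differentiableAt
  have dt_u : ∀ α x t, DifferentiableAt ℝ (fun s => u α s x) t := fun α x t =>
    ((Hu α).comp (differentiable_id.prodMk (differentiable_const x))).differentiableAt
  have dx_u : ∀ α t x, DifferentiableAt ℝ (fun y => u α t y) x := fun α t x =>
    ((Hu α).comp ((differentiable_const t).prodMk differentiable_id)).differentiableAt
  have dt_ub : ∀ x t, DifferentiableAt ℝ (fun s => ubar s x) t := by
    intro x t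
    have e : (fun s => ubar s x) = fun s => ∑ β, l β * u β s x := funext fun s => hubar s x
    rw [e]
    exact DifferentiableAt.fun_sum fun β _ => (dt_u β x t).const_mul _
  have dx_ub : ∀ t x, DifferentiableAt ℝ (fun y => ubar t y) x := by
    intro t x
    have e : (fun y => ubar t y) = fun y => ∑ β, l β * u β t y := funext fun y => hubar t y
    rw [e]
    exact DifferentiableAt.fun_sum fun β _ => (dx_u β t x).const_mul _
  -- differentiability of the momentum fluxes
  have dA : ∀ α x t, DifferentiableAt ℝ (fun s => h s x * u α s x) t :=
    fun α x t => (dt_h x t).mul (dt_u α x t)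
  have dB : ∀ x t, DifferentiableAt ℝ (fun s => h s x * ubar s x) t :=
    fun x t => (dt_h x t).mul (dt_ub x t)
  have dC : ∀ α t x, DifferentiableAt ℝ
      (fun y => h t y * u α t y * ubar t y + g * (h t y) ^ 2 / 2) x :=
    fun α t x => (((dx_h t x).mul (dx_u α t x)).mul (dx_ub t x)).add
      ((((dx_h t x).pow 2).const_mul g).div_const 2)
  have dD : ∀ t x, DifferentiableAt ℝ
      (fun y => h t y * (ubar t y) ^ 2 + g * (h t y) ^ 2 / 2) x :=
    fun t x => ((dx_h t x).mul ((dx_ub t x).pow 2)).add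
      ((((dx_h t x).pow 2).const_mul g).div_const 2)
  -- the mean momentum equation
  have mean : ∀ t x,
      deriv (fun s => h s x * ubar s x) t
        + deriv (fun y => h t y * (ubar t y) ^ 2 + g * (h t y) ^ 2 / 2) x
      = -(g * h t x * deriv zb x) := by
    intro t x
    have e1 : (fun s => h s x * ubar s x) = fun s => ∑ β, l β * (h s x * u β s x) :=
      funext fun s => by
        rw [hubar, Finset.mul_sum]
        exact Finset.sum_congr rfl fun β _ => by ring
    have e2 : (fun y => h t y * (ubar t y) ^ 2 + g * (h t y) ^ 2 / 2)
        = fun y => ∑ β, l β * (h t y * u β t y * ubar t y + g * (h t y) ^ 2 / 2) :=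
      funext fun y => by
        have : ∑ β, l β * (h t y * u β t y * ubar t y + g * (h t y) ^ 2 / 2)
            = (h t y * ubar t y) * (∑ β, l β * u β t y)
              + (∑ β, l β) * (g * (h t y) ^ 2 / 2) := by
          rw [Finset.mul_sum, Finset.sum_mul, ← Finset.sum_add_distrib]
          exact Finset.sum_congr rfl fun β _ => by ring
        rw [this, ← hubar, hlsum]
        ring
    have d1 : deriv (fun s => h s x * ubar s x) t
        = ∑ β, l β * deriv (fun s => h s x * u β s x) t := by
      rw [e1, deriv_fun_sum fun β _ => (dA β x t).const_mul _]
      exact Finset.sum_congr rfl fun β _ => deriv_const_mul _ (dA β x t)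
    have d2 : deriv (fun y => h t y * (ubar t y) ^ 2 + g * (h t y) ^ 2 / 2) x
        = ∑ β, l β * deriv
            (fun y => h t y * u β t y * ubar t y + g * (h t y) ^ 2 / 2) x := by
      rw [e2, deriv_fun_sum fun β _ => (dC β t x).const_mul _]
      exact Finset.sum_congr rfl fun β _ => deriv_const_mul _ (dC β t x)
    rw [d1, d2, ← Finset.sum_add_distrib]
    have : ∀ β ∈ Finset.univ,
        l β * deriv (fun s => h s x * u β s x) t
          + l β * deriv (fun y => h t y * u β t y * ubar t y + g * (h t y) ^ 2 / 2) x
        = l β * (-(g * h t x * deriv zb x)) := fun β _ => by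
      rw [← mul_add, mom β t x]
    rw [Finset.sum_congr rfl this, ← Finset.sum_mul, hlsum, one_mul]
  refine ⟨mean, ?_, ?_⟩
  · intro α t x
    have eA : (fun s => h s x * σ α s x)
        = fun s => h s x * u α s x - h s x * ubar s x :=
      funext fun s => by rw [hσ]; ring
    have eB : (fun y => h t y * ubar t y * σ α t y)
        = fun y => (h t y * u α t y * ubar t y + g * (h t y) ^ 2 / 2)
            - (h t y * (ubar t y) ^ 2 + g * (h t y) ^ 2 / 2) :=
      funext fun y => by rw [hσ]; ring
    rw [eA, eB, deriv_fun_sub (dA α x t) (dB x t), deriv_fun_sub (dC α t x) (dD t x)]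
    have h1 := mom α t x
    have h2 := mean t x
    linarith
  · intro t x
    calc ∑ α, l α * h t x * σ α t x
        = ∑ α, (h t x * (l α * u α t x) - (h t x * ubar t x) * l α) :=
          Finset.sum_congr rfl fun α _ => by rw [hσ]; ring
      _ = h t x * (∑ α, l α * u α t x) - (h t x * ubar t x) * (∑ α, l α) := by
          rw [Finset.sum_sub_distrib, ← Finset.mul_sum, ← Finset.mul_sum]
      _ = 0 := by rw [← hubar, hlsum]; ring
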